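/- Let n ≥ 1 and 0 ≤ k ≤ n − 1 be natural numbers, set N = 2n − k − 1, and let g, h : Fin n → (Fin n → ZMod 2) satisfy ∑_{l} (h i l) · (g j l) = 1 if i = j and 0 otherwise, for all i, j. Let pad : (Fin n → ZMod 2) → (Fin N → ZMod 2) extend a vector by zeros, and for n ≤ r < N let e_r : Fin N → ZMod 2 be the standard basis vector with a 1 in coordinate r. Define, with 0-based indices, the vectors in (Fin N → ZMod 2) × (Fin N → ZMod 2): A_i = (pad(g i), 0) for 0 ≤ i < k; B_j = (pad(g (k+j)) + e_{n+j}, 0) and C_j = (0, pad(h (k+j)) + e_{n+j}) for 0 ≤ j < n − k − 1; and the logical vectors z̄ = (pad(g (n−1)), 0) and x̄ = (0, pad(h (n−1))). Then ω(z̄, v) = 0 and ω(x̄, v) = 0 for every v among the A_i, B_j, C_j, and ω(z̄, x̄) = 1, where ω((z,x),(z',x')) = ∑_l z_l·x'_l + ∑_l x_l·z'_l ∈ ZMod 2. -/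
import Mathlib


/-- Pad a vector in `Fin n → ZMod 2` with zeros to a vector in `Fin N → ZMod 2`. -/
def padV (n N : ℕ) (v : Fin n → ZMod 2) : Fin N → ZMod 2 :=
  fun r => if h : (r : ℕ) < n then v ⟨r, h⟩ else 0

/-- Standard basis vector of `Fin N → ZMod 2` with a `1` in coordinate `r`. -/
def eV (N : ℕ) (r : ℕ) : Fin N → ZMod 2 := fun l => if (l : ℕ) = r then 1 else 0

/-- Symplectic product of two Pauli operators in binary representation. -/
def sympl (N : ℕ) (u v : (Fin N → ZMod 2) × (Fin N → ZMod 2)) : ZMod 2 :=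
  (∑ l, u.1 l * v.2 l) + (∑ l, u.2 l * v.1 l)

/-- The symplectic representatives of the stabilizer generators
`S_i = Z^{g_i}` (for `i < k`), `S_{k+j} = Z^{g_{k+j}} ⊗ Z_{n+j}` and
`S_{n-1+j} = X^{h_{k+j}} ⊗ X_{n+j}` (for `j < n - k - 1`) of the
`[[2n-k-1, 1]]` code built from a classical code with generator rows `g`. -/
def gens (n k : ℕ) (hn : 1 ≤ n) (hk : k ≤ n - 1) (g h : Fin n → Fin n → ZMod 2) :
    Fin k ⊕ Fin (n - k - 1) ⊕ Fin (n - k - 1) →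
      (Fin (2 * n - k - 1) → ZMod 2) × (Fin (2 * n - k - 1) → ZMod 2)
  | Sum.inl i => (padV n (2 * n - k - 1) (g ⟨i.1, by have := i.2; omega⟩), 0)
  | Sum.inr (Sum.inl j) =>
      (padV n (2 * n - k - 1) (g ⟨k + j.1, by have := j.2; omega⟩)
        + eV (2 * n - k - 1) (n + j.1), 0)
  | Sum.inr (Sum.inr j) =>
      (0, padV n (2 * n - k - 1) (h ⟨k + j.1, by have := j.2; omega⟩)
        + eV (2 * n - k - 1) (n + j.1))

lemma sum_pad_pad (n N : ℕ) (hN : n ≤ N) (u v : Fin n → ZMod 2) :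
    ∑ l : Fin N, padV n N u l * padV n N v l = ∑ l : Fin n, u l * v l := by
  have h1 : ∑ l : Fin N, padV n N u l * padV n N v l
      = ∑ i ∈ Finset.range N,
          (if h : i < n then u ⟨i, h⟩ else 0) * (if h : i < n then v ⟨i, h⟩ else 0) := by
    simp only [padV]
    rw [Fin.sum_univ_eq_sum_range
      (fun i => (if h : i < n then u ⟨i, h⟩ else 0) * (if h : i < n then v ⟨i, h⟩ else 0)) N]
  rw [h1, ← Finset.sum_subset (Finset.range_subset_range.mpr hN)
    (fun x _ hx => by
      rw [dif_neg (by simpa using hx), zero_mul])]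
  rw [← Fin.sum_univ_eq_sum_range
      (fun i => (if h : i < n then u ⟨i, h⟩ else 0) * (if h : i < n then v ⟨i, h⟩ else 0)) n]
  apply Finset.sum_congr rfl
  intro l _
  simp [l.2]

lemma sum_pad_e (n N j : ℕ) (u : Fin n → ZMod 2) :
    ∑ l : Fin N, padV n N u l * eV N (n + j) l = 0 := by
  apply Finset.sum_eq_zero
  intro l _
  by_cases hl : (l : ℕ) = n + j
  · rw [padV, dif_neg (by omega), zero_mul]
  · rw [eV]
    simp [hl]

/-- The logical operators `Z̄ = Z^{g_{n-1}}` and `X̄ = X^{h_{n-1}}` of the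
`[[2n-k-1, 1]]` code commute with every stabilizer generator and anticommute
with each other: their symplectic products with all generators vanish, while
`ω(z̄, x̄) = 1`. -/
theorem logicals_valid (n k : ℕ) (hn : 1 ≤ n) (hk : k ≤ n - 1)
    (g h : Fin n → Fin n → ZMod 2)
    (hdual : ∀ i j, (∑ l, h i l * g j l) = if i = j then 1 else 0) :
    let zbar : (Fin (2 * n - k - 1) → ZMod 2) × (Fin (2 * n - k - 1) → ZMod 2) :=
      (padV n (2 * n - k - 1) (g ⟨n - 1, by omega⟩), 0)
    let xbar : (Fin (2 * n - k - 1) → ZMod 2) × (Fin (2 * n - k - 1) → ZMod 2) :=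
      (0, padV n (2 * n - k - 1) (h ⟨n - 1, by omega⟩))
    (∀ a : Fin k ⊕ Fin (n - k - 1) ⊕ Fin (n - k - 1),
        sympl (2 * n - k - 1) zbar (gens n k hn hk g h a) = 0 ∧
        sympl (2 * n - k - 1) xbar (gens n k hn hk g h a) = 0) ∧
      sympl (2 * n - k - 1) zbar xbar = 1 := by
  intro zbar xbar
  have hN : n ≤ 2 * n - k - 1 := by omega
  have hgh : ∀ (a b : Fin n), ∑ l, g a l * h b l = ∑ l, h b l * g a l :=
    fun a b => Finset.sum_congr rfl fun l _ => mul_comm _ _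
  constructor
  · intro a
    match a with
    | Sum.inl i =>
        constructor
        · simp [sympl, gens, zbar]
        · simp only [sympl, gens, xbar, Prod.fst, Prod.snd, Pi.zero_apply, zero_mul,
            mul_zero, Finset.sum_const_zero, zero_add, add_zero]
          rw [sum_pad_pad n _ hN, hdual, if_neg]
          intro hEq
          have h2 : n - 1 = i.1 := congrArg Fin.val hEq
          have hi := i.2
          omega
    | Sum.inr (Sum.inl j) =>
        constructor
        · simp [sympl, gens, zbar]
        · simp only [sympl, gens, xbar, Prod.fst, Prod.snd, Pi.zero_apply, zero_mul,
            mul_zero, Finset.sum_const_zero, zero_add, add_zero, Pi.add_apply, mul_add]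
          rw [Finset.sum_add_distrib, sum_pad_pad n _ hN, sum_pad_e, add_zero,
            hdual, if_neg]
          have hj := j.2
          simp [Fin.ext_iff]
          omega
    | Sum.inr (Sum.inr j) =>
        constructor
        · simp only [sympl, gens, zbar, Prod.fst, Prod.snd, Pi.zero_apply, zero_mul,
            mul_zero, Finset.sum_const_zero, zero_add, add_zero, Pi.add_apply, mul_add]
          rw [Finset.sum_add_distrib, sum_pad_pad n _ hN, sum_pad_e, add_zero,
            hgh, hdual, if_neg]
          have hj := j.2
          simp [Fin.ext_iff]
          omega
        · simp [sympl, gens, xbar]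
  · simp only [sympl, zbar, xbar, Prod.fst, Prod.snd, Pi.zero_apply, zero_mul,
      mul_zero, Finset.sum_const_zero, zero_add, add_zero]
    rw [sum_pad_pad n _ hN, hgh, hdual, if_pos rfl]
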